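/- Let g be a holomorphic function on the open unit disk 𝔻 = {λ ∈ ℂ : |λ| < 1} such that Re[ g(λ) / (−(1−λ)²) ] ≥ 0 for all λ ∈ 𝔻. Then the limit lim_{r→1⁻} g(r)/(r−1) exists, and it is a nonnegative real number. -/

import Mathlib

open Filter Metric Topology
open Complex Set

lemma aux1 (r : ℝ) (z : ℂ) :
    normSq (1 + r*z) - normSq (z + r) = (1 - r^2) * (1 - normSq z) := by
  simp [Complex.normSq_apply, Complex.add_re, Complex.add_im, Complex.mul_re, Complex.mul_im,
    Complex.ofReal_re, Complex.ofReal_im]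
  ring

lemma aux1' (r : ℝ) (z : ℂ) :
    normSq (1 - r*z) - normSq (z - r) = (1 - r^2) * (1 - normSq z) := by
  simp [Complex.normSq_apply, Complex.sub_re, Complex.sub_im, Complex.mul_re, Complex.mul_im,
    Complex.ofReal_re, Complex.ofReal_im]
  ring

lemma aux2 (A B : ℂ) :
    normSq (A + (starRingEnd ℂ) B) - normSq (A - B) = 4 * A.re * B.re := by
  simp [Complex.normSq_apply, Complex.add_re, Complex.add_im, Complex.sub_re, Complex.sub_im]
  ring

lemma abs_lt_abs_of_normSq {a b : ℂ} (h : normSq a < normSq b) : ‖a‖ < ‖b‖ := by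
  rw [Complex.norm_def, Complex.norm_def]
  exact Real.sqrt_lt_sqrt (normSq_nonneg a) h

lemma norm_sq_eq_normSq (a : ℂ) : ‖a‖^2 = normSq a := by
  rw [Complex.sq_norm]

/-- Schwarz–Pick, strict positivity version. -/
lemma sp {h : ℂ → ℂ} (hd : DifferentiableOn ℂ h (ball 0 1))
    (hp : ∀ z ∈ ball (0:ℂ) 1, 0 < (h z).re) {r : ℝ} (hr0 : 0 ≤ r) (hr1 : r < 1)
    {z : ℂ} (hz : z ∈ ball (0:ℂ) 1) :
    ‖h z - h r‖ * ‖1 - (r:ℂ)*z‖ ≤ ‖z - r‖ * ‖h z + (starRingEnd ℂ) (h r)‖ := by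
  have hrb : (r:ℂ) ∈ ball (0:ℂ) 1 := by
    simp only [mem_ball_zero_iff, Complex.norm_real, Real.norm_eq_abs, _root_.abs_of_nonneg hr0]
    exact hr1
  have hden : ∀ w ∈ ball (0:ℂ) 1, h w + (starRingEnd ℂ) (h r) ≠ 0 := by
    intro w hw
    have h1 : 0 < normSq (h w + (starRingEnd ℂ) (h r)) := by
      have := aux2 (h w) (h r)
      nlinarith [normSq_nonneg (h w - h r), hp w hw, hp _ hrb]
    intro hc; rw [hc] at h1; simp at h1
  set F : ℂ → ℂ := fun w => (h w - h r)/(h w + (starRingEnd ℂ) (h r)) with hF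
  have Fd : DifferentiableOn ℂ F (ball 0 1) :=
    (hd.sub_const _).div (hd.add_const _) hden
  have Fmaps : ∀ w ∈ ball (0:ℂ) 1, ‖F w‖ < 1 := by
    intro w hw
    have h2 : normSq (h w - h r) < normSq (h w + (starRingEnd ℂ) (h r)) := by
      have := aux2 (h w) (h r)
      nlinarith [hp w hw, hp _ hrb]
    have h3 := abs_lt_abs_of_normSq h2
    rw [hF]
    simp only [norm_div]
    rw [div_lt_one (lt_of_le_of_lt (norm_nonneg _) h3)]
    exact h3
  have h1r : 0 < 1 - r^2 := by nlinarith
  set m : ℂ → ℂ := fun w => (w + r)/(1 + r*w) with hm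
  have hmden : ∀ w ∈ ball (0:ℂ) 1, (1:ℂ) + r*w ≠ 0 := by
    intro w hw hc
    have hlt : ‖(r:ℂ)*w‖ < 1 := by
      rw [norm_mul, Complex.norm_real, Real.norm_eq_abs, _root_.abs_of_nonneg hr0]
      calc r * ‖w‖ ≤ 1 * ‖w‖ := mul_le_mul_of_nonneg_right hr1.le (norm_nonneg w)
        _ < 1 := by rw [one_mul]; exact mem_ball_zero_iff.mp hw
    have h4 : (r:ℂ)*w = -1 := by linear_combination hc
    rw [h4] at hlt; simp at hlt
  have md : DifferentiableOn ℂ m (ball 0 1) := by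
    apply DifferentiableOn.div
    · exact (differentiable_id.add_const _).differentiableOn
    · exact ((differentiable_const _).mul differentiable_id).const_add 1 |>.differentiableOn
    · exact hmden
  have mmaps : ∀ w ∈ ball (0:ℂ) 1, m w ∈ ball (0:ℂ) 1 := by
    intro w hw
    have hns : normSq w < 1 := by
      have := mem_ball_zero_iff.mp hw
      rw [← norm_sq_eq_normSq]; nlinarith [norm_nonneg w]
    have h5 : normSq (w + r) < normSq (1 + r*w) := by
      have := aux1 r w
      nlinarith [mul_pos h1r (by linarith : (0:ℝ) < 1 - normSq w)]
    have h6 := abs_lt_abs_of_normSq h5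
    rw [mem_ball_zero_iff, hm]
    simp only [norm_div]
    rw [div_lt_one (lt_of_le_of_lt (norm_nonneg _) h6)]
    exact h6
  set G : ℂ → ℂ := fun w => F (m w) with hG
  have Gd : DifferentiableOn ℂ G (ball 0 1) := Fd.comp md mmaps
  have Gmaps : Set.MapsTo G (ball (0:ℂ) 1) (ball (0:ℂ) 1) := by
    intro w hw
    exact mem_ball_zero_iff.mpr (Fmaps _ (mmaps w hw))
  have G0 : G 0 = 0 := by
    have hm0 : m 0 = r := by rw [hm]; simp
    rw [hG]; simp only [hm0, hF, sub_self, zero_div]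
  have hzr : (1:ℂ) - r*z ≠ 0 := by
    intro hc
    have hlt : ‖(r:ℂ)*z‖ < 1 := by
      rw [norm_mul, Complex.norm_real, Real.norm_eq_abs, _root_.abs_of_nonneg hr0]
      calc r * ‖z‖ ≤ 1 * ‖z‖ := mul_le_mul_of_nonneg_right hr1.le (norm_nonneg z)
        _ < 1 := by rw [one_mul]; exact mem_ball_zero_iff.mp hz
    have h4 : (r:ℂ)*z = 1 := by linear_combination -hc
    rw [h4] at hlt; simp at hlt
  set w : ℂ := (z - r)/(1 - r*z) with hwdef
  have hnsz : normSq z < 1 := by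
    have := mem_ball_zero_iff.mp hz
    rw [← norm_sq_eq_normSq]; nlinarith [norm_nonneg z]
  have hid : normSq (z - r) < normSq (1 - r*z) := by
    have := aux1' r z
    nlinarith [mul_pos h1r (by linarith : (0:ℝ) < 1 - normSq z)]
  have hwn := abs_lt_abs_of_normSq hid
  have hwb : w ∈ ball (0:ℂ) 1 := by
    rw [mem_ball_zero_iff, hwdef]
    simp only [norm_div]
    rw [div_lt_one (lt_of_le_of_lt (norm_nonneg _) hwn)]
    exact hwn
  have hmw : m w = z := by
    have hd2 : (1:ℂ) + r*w ≠ 0 := hmden w hwb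
    rw [hm]
    rw [div_eq_iff hd2, hwdef]
    linear_combination (div_mul_cancel₀ (z - r) hzr)
  have hsch : ‖G w‖ ≤ ‖w‖ := by
    have := Complex.norm_le_norm_of_mapsTo_ball Gd (Gmaps.mono_right ball_subset_closedBall) G0 (mem_ball_zero_iff.mp hwb)
    simpa using this
  have hsch2 : ‖F z‖ ≤ ‖w‖ := by rw [← hmw]; exact hsch
  clear hsch; rename' hsch2 => hsch
  have hFz : ‖F z‖ = ‖h z - h r‖ / ‖h z + (starRingEnd ℂ) (h r)‖ := by
    rw [hF]; simp [norm_div]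
  have hwn2 : ‖w‖ = ‖z - r‖ / ‖1 - (r:ℂ)*z‖ := by
    rw [hwdef]; simp [norm_div]
  rw [hFz, hwn2] at hsch
  have p1 : 0 < ‖h z + (starRingEnd ℂ) (h r)‖ := by
    rw [norm_pos_iff]; exact hden z hz
  have p2 : 0 < ‖(1:ℂ) - r*z‖ := by rw [norm_pos_iff]; exact hzr
  rw [div_le_div_iff₀ p1 p2] at hsch
  linarith

/-- Harnack inequality, strict version. -/
lemma harnack' {h : ℂ → ℂ} (hd : DifferentiableOn ℂ h (ball 0 1))
    (hp : ∀ z ∈ ball (0:ℂ) 1, 0 < (h z).re) {r : ℝ} (hr0 : 0 ≤ r) (hr1 : r < 1)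
    {z : ℂ} (hz : z ∈ ball (0:ℂ) 1) :
    (‖1 - (r:ℂ)*z‖ - ‖z - r‖) * (h r).re ≤ (‖1 - (r:ℂ)*z‖ + ‖z - r‖) * (h z).re ∧
    (‖1 - (r:ℂ)*z‖ - ‖z - r‖) * (h z).re ≤ (‖1 - (r:ℂ)*z‖ + ‖z - r‖) * (h r).re := by
  have hrb : (r:ℂ) ∈ ball (0:ℂ) 1 := by
    simp only [mem_ball_zero_iff, Complex.norm_real, Real.norm_eq_abs, _root_.abs_of_nonneg hr0]
    exact hr1
  have hsp := sp hd hp hr0 hr1 hz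
  set N := ‖(1:ℂ) - (r:ℂ)*z‖ with hN
  set M := ‖z - (r:ℂ)‖ with hM
  have h1r : 0 < 1 - r^2 := by nlinarith
  have hnsz : normSq z < 1 := by
    have := mem_ball_zero_iff.mp hz
    rw [← norm_sq_eq_normSq]; nlinarith [norm_nonneg z]
  have hMN : M < N := by
    apply abs_lt_abs_of_normSq
    have := aux1' r z
    nlinarith [mul_pos h1r (by linarith : (0:ℝ) < 1 - normSq z)]
  have hM0 : 0 ≤ M := norm_nonneg _
  have hsq : normSq (h z - h r) * N^2 ≤ M^2 * normSq (h z + (starRingEnd ℂ) (h r)) := by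
    have h2 := mul_le_mul hsp hsp (by positivity) (by positivity)
    calc normSq (h z - h r) * N^2 = (‖h z - h r‖ * N) * (‖h z - h r‖ * N) := by
          rw [← norm_sq_eq_normSq]; ring
      _ ≤ (M * ‖h z + (starRingEnd ℂ) (h r)‖) * (M * ‖h z + (starRingEnd ℂ) (h r)‖) := h2
      _ = M^2 * normSq (h z + (starRingEnd ℂ) (h r)) := by rw [← norm_sq_eq_normSq]; ring
  set a₁ := (h z).re
  set b₁ := (h r).re
  set V := (h z).im - (h r).im with hV
  have e1 : normSq (h z - h r) = (a₁ - b₁)^2 + V^2 := by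
    simp [normSq_apply, Complex.sub_re, Complex.sub_im]; ring
  have e2 : normSq (h z + (starRingEnd ℂ) (h r)) = (a₁ + b₁)^2 + V^2 := by
    simp [normSq_apply, Complex.add_re, Complex.add_im]; ring
  rw [e1, e2] at hsq
  have ha : 0 < a₁ := hp z hz
  have hb : 0 < b₁ := hp _ hrb
  have hkey : (N*(b₁-a₁))^2 ≤ (M*(a₁+b₁))^2 := by
    nlinarith [sq_nonneg V, mul_nonneg (sq_nonneg V) (by nlinarith : (0:ℝ) ≤ N^2 - M^2)]
  have hY : 0 ≤ M*(a₁+b₁) := by positivity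
  constructor
  · nlinarith [hkey, hY]
  · nlinarith [hkey, hY]

/-- Derivative bound, strict version. -/
lemma deriv_bound' {h : ℂ → ℂ} (hd : DifferentiableOn ℂ h (ball 0 1))
    (hp : ∀ z ∈ ball (0:ℂ) 1, 0 < (h z).re) {x : ℝ} (hx0 : 0 ≤ x) (hx1 : x < 1) :
    ‖deriv h x‖ * (1 - x) ≤ 2 * (h x).re := by
  have hxb : (x:ℂ) ∈ ball (0:ℂ) 1 := by
    simp only [mem_ball_zero_iff, Complex.norm_real, Real.norm_eq_abs, _root_.abs_of_nonneg hx0]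
    exact hx1
  have hsub : ball (x:ℂ) (1-x) ⊆ ball (0:ℂ) 1 := by
    apply ball_subset_ball'
    simp only [dist_zero_right, Complex.norm_real, Real.norm_eq_abs, _root_.abs_of_nonneg hx0]
    linarith
  have hden : ∀ w ∈ ball (0:ℂ) 1, h w + (starRingEnd ℂ) (h x) ≠ 0 := by
    intro w hw
    have h1 : 0 < normSq (h w + (starRingEnd ℂ) (h x)) := by
      have := aux2 (h w) (h x)
      nlinarith [normSq_nonneg (h w - h x), hp w hw, hp _ hxb]
    intro hc; rw [hc] at h1; simp at h1
  set F : ℂ → ℂ := fun w => (h w - h x)/(h w + (starRingEnd ℂ) (h x)) with hF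
  have Fd : DifferentiableOn ℂ F (ball (x:ℂ) (1-x)) :=
    (((hd.sub_const _).div (hd.add_const _) hden)).mono hsub
  have Fx : F x = 0 := by rw [hF]; simp
  have Fmaps : MapsTo F (ball (x:ℂ) (1-x)) (ball (F x) 1) := by
    intro w hw
    rw [Fx, mem_ball_zero_iff]
    have hwb := hsub hw
    have h2 : normSq (h w - h x) < normSq (h w + (starRingEnd ℂ) (h x)) := by
      have := aux2 (h w) (h x)
      nlinarith [hp w hwb, hp _ hxb]
    have h3 := abs_lt_abs_of_normSq h2
    rw [hF]
    simp only [norm_div]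
    rw [div_lt_one (lt_of_le_of_lt (norm_nonneg _) h3)]
    exact h3
  have hderF := Complex.norm_deriv_le_div_of_mapsTo_ball Fd (Fmaps.mono_right ball_subset_closedBall) (by linarith : (0:ℝ) < 1-x)
  -- compute deriv F x
  set d := deriv h (x:ℂ) with hdd
  have hdh : HasDerivAt h d (x:ℂ) :=
    (hd.differentiableAt (isOpen_ball.mem_nhds hxb)).hasDerivAt
  have h1 : HasDerivAt (fun w => h w - h x) d (x:ℂ) := hdh.sub_const _
  have h2 : HasDerivAt (fun w => h w + (starRingEnd ℂ) (h x)) d (x:ℂ) := hdh.add_const _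
  have hFder : HasDerivAt F
      ((d * (h x + (starRingEnd ℂ) (h x)) - (h x - h x) * d) / (h x + (starRingEnd ℂ) (h x))^2)
      (x:ℂ) := h1.div h2 (hden _ hxb)
  have hval : (d * (h x + (starRingEnd ℂ) (h x)) - (h x - h x) * d) / (h x + (starRingEnd ℂ) (h x))^2
      = d / (((2 * (h x).re : ℝ)):ℂ) := by
    rw [← Complex.add_conj]
    have hne := hden _ hxb
    field_simp
    ring
  have hderivF : deriv F (x:ℂ) = d / (((2 * (h x).re : ℝ)):ℂ) := by
    rw [← hval]; exact hFder.deriv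
  rw [hderivF] at hderF
  have hu : 0 < (h x).re := hp _ hxb
  rw [norm_div, Complex.norm_real, Real.norm_eq_abs, _root_.abs_of_nonneg (by linarith : (0:ℝ) ≤ 2*(h x).re)] at hderF
  rw [div_le_div_iff₀ (by linarith) (by linarith)] at hderF
  linarith

lemma le_aux {A B c : ℝ} (hc : 0 ≤ c) (H : ∀ ε : ℝ, 0 < ε → A ≤ B + c*ε) : A ≤ B := by
  refine le_of_forall_pos_le_add fun δ hδ => ?_
  have h1 := H (δ/(c+1)) (by positivity)
  have h2 : c*(δ/(c+1)) ≤ δ := by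
    rw [mul_div_assoc', div_le_iff₀ (by linarith : (0:ℝ) < c+1)]
    nlinarith
  linarith

lemma eps_re (h : ℂ → ℂ) (ε : ℝ) (w : ℂ) : ((fun z => h z + (ε:ℂ)) w).re = (h w).re + ε := by
  simp

/-- Harnack inequality, non-strict version. -/
lemma harnack {h : ℂ → ℂ} (hd : DifferentiableOn ℂ h (ball 0 1))
    (hp : ∀ z ∈ ball (0:ℂ) 1, 0 ≤ (h z).re) {r : ℝ} (hr0 : 0 ≤ r) (hr1 : r < 1)
    {z : ℂ} (hz : z ∈ ball (0:ℂ) 1) :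
    (‖1 - (r:ℂ)*z‖ - ‖z - r‖) * (h r).re ≤ (‖1 - (r:ℂ)*z‖ + ‖z - r‖) * (h z).re ∧
    (‖1 - (r:ℂ)*z‖ - ‖z - r‖) * (h z).re ≤ (‖1 - (r:ℂ)*z‖ + ‖z - r‖) * (h r).re := by
  have main : ∀ ε : ℝ, 0 < ε →
      (‖1 - (r:ℂ)*z‖ - ‖z - r‖) * ((h r).re + ε) ≤ (‖1 - (r:ℂ)*z‖ + ‖z - r‖) * ((h z).re + ε) ∧
      (‖1 - (r:ℂ)*z‖ - ‖z - r‖) * ((h z).re + ε) ≤ (‖1 - (r:ℂ)*z‖ + ‖z - r‖) * ((h r).re + ε) := by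
    intro ε hε
    have hd' : DifferentiableOn ℂ (fun w => h w + (ε:ℂ)) (ball 0 1) := hd.add_const _
    have hp' : ∀ w ∈ ball (0:ℂ) 1, 0 < ((fun z => h z + (ε:ℂ)) w).re := by
      intro w hw; rw [eps_re]; linarith [hp w hw]
    have := harnack' hd' hp' hr0 hr1 hz
    simpa using this
  have hM : (0:ℝ) ≤ ‖z - (r:ℂ)‖ := norm_nonneg _
  constructor
  · apply le_aux (by linarith : (0:ℝ) ≤ 2*‖z - (r:ℂ)‖)
    intro ε hε
    have := (main ε hε).1
    nlinarith [this]
  · apply le_aux (by linarith : (0:ℝ) ≤ 2*‖z - (r:ℂ)‖)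
    intro ε hε
    have := (main ε hε).2
    nlinarith [this]

/-- Derivative bound, non-strict version. -/
lemma deriv_bound {h : ℂ → ℂ} (hd : DifferentiableOn ℂ h (ball 0 1))
    (hp : ∀ z ∈ ball (0:ℂ) 1, 0 ≤ (h z).re) {x : ℝ} (hx0 : 0 ≤ x) (hx1 : x < 1) :
    ‖deriv h x‖ * (1 - x) ≤ 2 * (h x).re := by
  apply le_aux (by norm_num : (0:ℝ) ≤ 2)
  intro ε hε
  have hd' : DifferentiableOn ℂ (fun w => h w + (ε:ℂ)) (ball 0 1) := hd.add_const _
  have hp' : ∀ w ∈ ball (0:ℂ) 1, 0 < ((fun z => h z + (ε:ℂ)) w).re := by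
    intro w hw; rw [eps_re]; linarith [hp w hw]
  have hdb := deriv_bound' hd' hp' hx0 hx1
  have hder : deriv (fun w => h w + (ε:ℂ)) (x:ℂ) = deriv h (x:ℂ) := by
    simp [deriv_add_const]
  rw [hder, eps_re] at hdb
  linarith

/-- Radial Harnack. -/
lemma radial_harnack {h : ℂ → ℂ} (hd : DifferentiableOn ℂ h (ball 0 1))
    (hp : ∀ z ∈ ball (0:ℂ) 1, 0 ≤ (h z).re) {r s : ℝ} (hr0 : 0 ≤ r) (hrs : r ≤ s) (hs1 : s < 1) :
    (1+r)*(1-s)*(h s).re ≤ (1-r)*(1+s)*(h r).re := by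
  have hsb : (s:ℂ) ∈ ball (0:ℂ) 1 := by
    simp only [mem_ball_zero_iff, Complex.norm_real, Real.norm_eq_abs,
      _root_.abs_of_nonneg (le_trans hr0 hrs)]
    exact hs1
  have h2 := (harnack hd hp hr0 (lt_of_le_of_lt hrs hs1) hsb).2
  have hrs1 : r*s < 1 := by nlinarith
  have hN : ‖(1:ℂ) - (r:ℂ)*(s:ℂ)‖ = 1 - r*s := by
    have : (1:ℂ) - (r:ℂ)*(s:ℂ) = ((1 - r*s : ℝ):ℂ) := by push_cast; ring
    rw [this, Complex.norm_real, Real.norm_eq_abs, _root_.abs_of_nonneg (by linarith)]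
  have hMe : ‖(s:ℂ) - (r:ℂ)‖ = s - r := by
    have : (s:ℂ) - (r:ℂ) = ((s - r : ℝ):ℂ) := by push_cast; ring
    rw [this, Complex.norm_real, Real.norm_eq_abs, _root_.abs_of_nonneg (by linarith)]
  rw [hN, hMe] at h2
  nlinarith [h2]

lemma step3 {h : ℂ → ℂ} (hd : DifferentiableOn ℂ h (ball 0 1))
    (hp : ∀ z ∈ ball (0:ℂ) 1, 0 ≤ (h z).re) {a : ℝ}
    (ha : Tendsto (fun r : ℝ => (1-r)*(h r).re) (𝓝[<] (1:ℝ)) (𝓝 a))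
    {z : ℂ} (hz : z ∈ ball (0:ℂ) 1) :
    a * (2 * (1 - normSq z)) ≤ 4 * normSq (1-z) * (h z).re := by
  have key : ∀ r:ℝ, 0 ≤ r → r < 1 →
      ((1-r)*(h r).re) * ((1+r)*(1 - normSq z)) ≤ ((‖1-(r:ℂ)*z‖+‖z-(r:ℂ)‖)^2) * (h z).re := by
    intro r hr0 hr1
    obtain ⟨h1, -⟩ := harnack hd hp hr0 hr1 hz
    set N := ‖(1:ℂ)-(r:ℂ)*z‖ with hN
    set M := ‖z-(r:ℂ)‖ with hM
    have hM0 : 0 ≤ M := norm_nonneg _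
    have hN0 : 0 ≤ N := norm_nonneg _
    have hid : N^2 - M^2 = (1-r^2)*(1-normSq z) := by
      rw [hN, hM, norm_sq_eq_normSq, norm_sq_eq_normSq]
      exact aux1' r z
    -- multiply h1 by (N+M) ≥ 0
    have h3 : (N+M)*((N-M)*(h r).re) ≤ (N+M)*((N+M)*(h z).re) :=
      mul_le_mul_of_nonneg_left h1 (by linarith)
    have h4 : (N+M)*((N-M)*(h r).re) = ((1-r)*(h r).re) * ((1+r)*(1-normSq z)) := by
      linear_combination (h r).re * hid
    calc ((1-r)*(h r).re) * ((1+r)*(1 - normSq z)) = (N+M)*((N-M)*(h r).re) := h4.symm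
      _ ≤ (N+M)*((N+M)*(h z).re) := h3
      _ = ((N+M)^2) * (h z).re := by ring
  have hNten : Tendsto (fun r:ℝ => ((‖1-(r:ℂ)*z‖+‖z-(r:ℂ)‖)^2) * (h z).re) (𝓝[<] (1:ℝ))
      (𝓝 (4 * normSq (1-z) * (h z).re)) := by
    have c1 : Continuous (fun r:ℝ => ((‖1-(r:ℂ)*z‖+‖z-(r:ℂ)‖)^2) * (h z).re) := by
      apply Continuous.mul _ continuous_const
      apply Continuous.pow
      apply Continuous.add
      · exact (continuous_const.sub (Complex.continuous_ofReal.mul continuous_const)).norm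
      · exact (continuous_const.sub Complex.continuous_ofReal).norm
    have := (c1.tendsto 1).mono_left (nhdsWithin_le_nhds (s := Iio (1:ℝ)))
    convert this using 2
    rw [show ((1:ℝ):ℂ) = 1 by norm_num]
    rw [show ‖z - 1‖ = ‖(1:ℂ) - z‖ from norm_sub_rev _ _]
    rw [show ‖(1:ℂ) - 1*z‖ = ‖(1:ℂ) - z‖ by rw [one_mul]]
    rw [← norm_sq_eq_normSq]
    ring
  have hLten : Tendsto (fun r:ℝ => ((1-r)*(h r).re) * ((1+r)*(1 - normSq z))) (𝓝[<] (1:ℝ))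
      (𝓝 (a * (2*(1 - normSq z)))) := by
    apply Tendsto.mul ha
    have c2 : Continuous (fun r:ℝ => (1+r)*(1 - normSq z)) := by continuity
    have := (c2.tendsto 1).mono_left (nhdsWithin_le_nhds (s := Iio (1:ℝ)))
    convert this using 2
    norm_num
  have hev : ∀ᶠ r : ℝ in 𝓝[<] (1:ℝ), ((1-r)*(h r).re) * ((1+r)*(1 - normSq z)) ≤
      ((‖1-(r:ℂ)*z‖+‖z-(r:ℂ)‖)^2) * (h z).re := by
    filter_upwards [Ioo_mem_nhdsLT_of_mem (by norm_num : (1:ℝ) ∈ Ioc (0:ℝ) 1)] with r hr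
    exact key r hr.1.le hr.2
  exact le_of_tendsto_of_tendsto hLten hNten hev

lemma memball {t : ℝ} (ht0 : 0 ≤ t) (ht1 : t < 1) : (t:ℂ) ∈ ball (0:ℂ) 1 := by
  simp only [mem_ball_zero_iff, Complex.norm_real, Real.norm_eq_abs, _root_.abs_of_nonneg ht0]
  exact ht1

/-- the limit of (1-r) * Re h(r) exists. -/
lemma exists_limit {h : ℂ → ℂ} (hd : DifferentiableOn ℂ h (ball 0 1))
    (hp : ∀ z ∈ ball (0:ℂ) 1, 0 ≤ (h z).re) :
    ∃ a : ℝ, 0 ≤ a ∧ Tendsto (fun r : ℝ => (1-r)*(h r).re) (𝓝[<] (1:ℝ)) (𝓝 a) := by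
  set φ : ℝ → ℝ := fun r => (1-r)*(h r).re/(1+r) with hφ
  have hφ0 : ∀ r:ℝ, 0 ≤ r → r < 1 → 0 ≤ φ r := by
    intro r hr0 hr1
    have := hp _ (memball hr0 hr1)
    rw [hφ]
    exact div_nonneg (mul_nonneg (by linarith) this) (by linarith)
  have hmono : ∀ r s : ℝ, 0 ≤ r → r ≤ s → s < 1 → φ s ≤ φ r := by
    intro r s hr0 hrs hs1
    have hk := radial_harnack hd hp hr0 hrs hs1
    rw [hφ]
    rw [div_le_div_iff₀ (by linarith : (0:ℝ) < 1+s) (by linarith : (0:ℝ) < 1+r)]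
    nlinarith [hk]
  set S := φ '' (Ico (0:ℝ) 1) with hS
  have hne : S.Nonempty := ⟨φ 0, mem_image_of_mem _ (by norm_num)⟩
  have hbdd : BddBelow S := by
    refine ⟨0, fun y hy => ?_⟩
    obtain ⟨r, hr, rfl⟩ := hy
    exact hφ0 r hr.1 hr.2
  set L := sInf S with hL
  have hL0 : 0 ≤ L := le_csInf hne (fun y hy => by
    obtain ⟨r, hr, rfl⟩ := hy; exact hφ0 r hr.1 hr.2)
  have htφ : Tendsto φ (𝓝[<] (1:ℝ)) (𝓝 L) := by
    rw [Metric.tendsto_nhdsWithin_nhds]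
    intro ε hε
    obtain ⟨y, hyS, hyL⟩ := exists_lt_of_csInf_lt hne (by linarith : L < L + ε)
    obtain ⟨r₀, hr₀, rfl⟩ := hyS
    refine ⟨1 - r₀, by linarith [hr₀.2], fun r hr hdist => ?_⟩
    have hr1 : r < 1 := hr
    rw [Real.dist_eq, abs_of_nonpos (by linarith)] at hdist
    have hrr₀ : r₀ < r := by linarith
    have hrIco : r ∈ Ico (0:ℝ) 1 := ⟨le_trans hr₀.1 hrr₀.le, hr1⟩
    have h1 : L ≤ φ r := csInf_le hbdd (mem_image_of_mem _ hrIco)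
    have h2 : φ r ≤ φ r₀ := hmono r₀ r hr₀.1 hrr₀.le hr1
    rw [Real.dist_eq, _root_.abs_of_nonneg (by linarith)]
    linarith
  refine ⟨2*L, by linarith, ?_⟩
  have t1 : Tendsto (fun r:ℝ => 1+r) (𝓝[<] (1:ℝ)) (𝓝 2) := by
    have hc : Continuous (fun r:ℝ => 1+r) := by continuity
    have := hc.tendsto (1:ℝ)
    norm_num at this
    exact this.mono_left nhdsWithin_le_nhds
  have := t1.mul htφ
  apply this.congr'
  filter_upwards [Ioo_mem_nhdsLT_of_mem (by norm_num : (1:ℝ) ∈ Ioc (0:ℝ) 1)] with r hr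
  have hne1 : (1:ℝ)+r ≠ 0 := by linarith [hr.1]
  rw [hφ]
  field_simp [hne1]

lemma reK (c : ℝ) (z : ℂ) :
    ((c:ℂ) * ((1+z)/(1-z))).re = c * (1 - normSq z) / normSq (1-z) := by
  rw [mul_div_assoc']
  rw [Complex.div_re]
  have e1 : ((c:ℂ)*(1+z)).re*(1-z).re/normSq (1-z) + ((c:ℂ)*(1+z)).im*(1-z).im/normSq (1-z)
      = (((c:ℂ)*(1+z)).re*(1-z).re + ((c:ℂ)*(1+z)).im*(1-z).im)/normSq (1-z) := by
    rw [← add_div]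
  rw [e1]
  congr 1
  simp [Complex.mul_re, Complex.mul_im, Complex.add_re, Complex.add_im, Complex.sub_re,
    Complex.sub_im, normSq_apply]
  ring

set_option maxHeartbeats 1000000 in
theorem stmt8 (g : ℂ → ℂ)
    (hhol : DifferentiableOn ℂ g (ball (0 : ℂ) 1))
    (hre : ∀ z ∈ ball (0 : ℂ) 1, 0 ≤ (g z / (-(1 - z) ^ 2)).re) :
    ∃ a : ℝ, 0 ≤ a ∧
      Tendsto (fun r : ℝ => g (r : ℂ) / ((r : ℂ) - 1)) (𝓝[<] (1 : ℝ)) (𝓝 (a : ℂ)) := by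
  set h : ℂ → ℂ := fun z => g z / (-(1-z)^2) with hh
  have hne1 : ∀ z ∈ ball (0:ℂ) 1, (1:ℂ) - z ≠ 0 := by
    intro z hz hc
    have hz1 : z = 1 := by linear_combination -hc
    rw [hz1, mem_ball_zero_iff] at hz
    norm_num at hz
  have hdh : DifferentiableOn ℂ h (ball 0 1) := by
    apply hhol.div
    · exact (((differentiable_const (1:ℂ)).sub differentiable_id).pow 2).neg.differentiableOn
    · intro z hz
      simp only [neg_ne_zero]
      exact pow_ne_zero _ (hne1 z hz)
  have hph : ∀ z ∈ ball (0:ℂ) 1, 0 ≤ (h z).re := hre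
  obtain ⟨a, ha0, hta⟩ := exists_limit hdh hph
  set h₁ : ℂ → ℂ := fun z => h z - ((a/2 : ℝ):ℂ) * ((1+z)/(1-z)) with hh₁
  have hd₁ : DifferentiableOn ℂ h₁ (ball 0 1) := by
    apply hdh.sub
    apply DifferentiableOn.const_mul
    apply DifferentiableOn.div
    · exact ((differentiable_const (1:ℂ)).add differentiable_id).differentiableOn
    · exact ((differentiable_const (1:ℂ)).sub differentiable_id).differentiableOn
    · exact hne1
  have hp₁ : ∀ z ∈ ball (0:ℂ) 1, 0 ≤ (h₁ z).re := by
    intro z hz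
    have hs3 := step3 hdh hph hta hz
    have hns : 0 < normSq (1-z) := normSq_pos.mpr (hne1 z hz)
    rw [hh₁]
    simp only [Complex.sub_re, reK]
    rw [sub_nonneg, div_le_iff₀ hns]
    nlinarith [hs3]
  -- limit of (1-r)*Re h₁(r) is 0
  have t2 : Tendsto (fun r:ℝ => 1+r) (𝓝[<] (1:ℝ)) (𝓝 2) := by
    have hc : Continuous (fun r:ℝ => 1+r) := by continuity
    have := hc.tendsto (1:ℝ)
    norm_num at this
    exact this.mono_left nhdsWithin_le_nhds
  have hta₁ : Tendsto (fun r:ℝ => (1-r)*(h₁ r).re) (𝓝[<] (1:ℝ)) (𝓝 0) := by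
    have t1 : Tendsto (fun r:ℝ => (a/2)*(1+r)) (𝓝[<] (1:ℝ)) (𝓝 a) := by
      have := t2.const_mul (a/2)
      convert this using 2
      ring
    have hsub := hta.sub t1
    rw [sub_self] at hsub
    apply hsub.congr'
    filter_upwards [Ioo_mem_nhdsLT_of_mem (by norm_num : (1:ℝ) ∈ Ioc (0:ℝ) 1)] with r hr
    have hr1 : (1:ℝ) - r ≠ 0 := by intro hc; linarith [hr.2]
    have e2 : (h₁ (r:ℂ)).re = (h (r:ℂ)).re - (a/2)*(1-normSq (r:ℂ))/normSq (1-(r:ℂ)) := by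
      rw [hh₁]; simp only [Complex.sub_re, reK]
    rw [e2]
    have e3 : normSq ((r:ℝ):ℂ) = r^2 := by rw [Complex.normSq_ofReal]; ring
    have e4 : normSq (1-((r:ℝ):ℂ)) = (1-r)^2 := by
      rw [show (1:ℂ) - ((r:ℝ):ℂ) = (((1-r:ℝ)):ℂ) by push_cast; ring, Complex.normSq_ofReal]; ring
    rw [e3, e4]
    field_simp
    ring
  have htφ₁ : Tendsto (fun r:ℝ => (1-r)*(h₁ r).re/(1+r)) (𝓝[<] (1:ℝ)) (𝓝 0) := by
    have := hta₁.div t2 (by norm_num)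
    rw [zero_div] at this
    exact this
  -- decay estimate
  have hkey : ∀ r₀ r : ℝ, 0 ≤ r₀ → r₀ ≤ r → r < 1 →
      (1-r)*‖h₁ (r:ℂ)‖ ≤ (1-r)*‖h₁ ((r₀:ℝ):ℂ)‖ + 4*((1-r₀)*(h₁ ((r₀:ℝ):ℂ)).re/(1+r₀)) := by
    intro r₀ r h00 hle h1r
    have hr₀1 : r₀ < 1 := lt_of_le_of_lt hle h1r
    set C := 4*((1-r₀)*(h₁ ((r₀:ℝ):ℂ)).re/(1+r₀)) with hC
    have hu₁0 : 0 ≤ (h₁ ((r₀:ℝ):ℂ)).re := hp₁ _ (memball h00 hr₀1)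
    have hC0 : 0 ≤ C := by
      rw [hC]
      have : (0:ℝ) ≤ (1-r₀)*(h₁ ((r₀:ℝ):ℂ)).re/(1+r₀) :=
        div_nonneg (mul_nonneg (by linarith) hu₁0) (by linarith)
      linarith
    have hmem : ∀ t:ℝ, t ∈ Icc r₀ r → (t:ℂ) ∈ ball (0:ℂ) 1 :=
      fun t ht => memball (le_trans h00 ht.1) (lt_of_le_of_lt ht.2 h1r)
    have hmvt := image_norm_le_of_norm_deriv_right_le_deriv_boundary'
      (f := fun t:ℝ => h₁ (t:ℂ) - h₁ ((r₀:ℝ):ℂ)) (a := r₀) (b := r)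
      (f' := fun t:ℝ => deriv h₁ (t:ℂ))
      (B := fun t:ℝ => C/(1-t) - C/(1-r₀)) (B' := fun t:ℝ => C/(1-t)^2)
      (by -- ContinuousOn f
        apply ContinuousOn.sub _ continuousOn_const
        exact hd₁.continuousOn.comp Complex.continuous_ofReal.continuousOn hmem)
      (by -- hf'
        intro x hx
        have hball : (x:ℂ) ∈ ball (0:ℂ) 1 := hmem x ⟨hx.1, hx.2.le⟩
        have hda : HasDerivAt h₁ (deriv h₁ (x:ℂ)) (x:ℂ) :=
          (hd₁.differentiableAt (isOpen_ball.mem_nhds hball)).hasDerivAt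
        exact ((hda.comp_ofReal).sub_const _).hasDerivWithinAt)
      (by simp) -- ‖f r₀‖ ≤ B r₀
      (by -- ContinuousOn B
        apply ContinuousOn.sub _ continuousOn_const
        apply ContinuousOn.div continuousOn_const
        · fun_prop
        · intro x hx
          have : x < 1 := lt_of_le_of_lt hx.2 h1r
          intro hc; linarith [hc]
        )
      (by -- hB'
        intro x hx
        have hx1 : x < 1 := lt_of_lt_of_le hx.2 h1r.le
        have h1x : (1:ℝ) - x ≠ 0 := by intro hc; linarith
        have hdC : HasDerivAt (fun t:ℝ => C/(1-t)) (C/(1-x)^2) x := by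
          have hden : HasDerivAt (fun t:ℝ => 1-t) (-1) x := (hasDerivAt_id x).const_sub 1
          have := (hasDerivAt_const x C).div hden h1x
          refine this.congr_deriv ?_
          ring
        exact ((hdC.sub_const _).hasDerivWithinAt))
      (by -- bound
        intro x hx
        have hx0 : 0 ≤ x := le_trans h00 hx.1
        have hx1 : x < 1 := lt_of_lt_of_le hx.2 h1r.le
        have hdb := deriv_bound hd₁ hp₁ hx0 hx1
        have hrh := radial_harnack hd₁ hp₁ h00 hx.1 hx1
        have hre0 : 0 ≤ (h₁ ((x:ℝ):ℂ)).re := hp₁ _ (memball hx0 hx1)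
        have e6 : 2*(1-x)*(h₁ ((x:ℝ):ℂ)).re ≤ C := by
          rw [hC, mul_div_assoc', le_div_iff₀ (by linarith : (0:ℝ) < 1+r₀)]
          nlinarith [hrh, mul_nonneg (mul_nonneg (by linarith : (0:ℝ) ≤ 1-r₀) hu₁0)
            (by linarith : (0:ℝ) ≤ 1 - x)]
        rw [le_div_iff₀ (by nlinarith : (0:ℝ) < (1-x)^2)]
        nlinarith [hdb, e6, norm_nonneg (deriv h₁ ((x:ℝ):ℂ))])
    have hfin := hmvt (right_mem_Icc.mpr hle)
    -- ‖h₁ r − h₁ r₀‖ ≤ C/(1−r) − C/(1−r₀)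
    have htri : ‖h₁ ((r:ℝ):ℂ)‖ ≤ ‖h₁ ((r₀:ℝ):ℂ)‖ + ‖h₁ ((r:ℝ):ℂ) - h₁ ((r₀:ℝ):ℂ)‖ := by
      calc ‖h₁ ((r:ℝ):ℂ)‖ = ‖h₁ ((r₀:ℝ):ℂ) + (h₁ ((r:ℝ):ℂ) - h₁ ((r₀:ℝ):ℂ))‖ := by ring_nf
        _ ≤ _ := norm_add_le _ _
    have hCr : (1-r)*(C/(1-r)) = C := by
      rw [mul_div_assoc', mul_comm, mul_div_assoc, div_self (by linarith : (1:ℝ)-r ≠ 0), mul_one]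
    have hCr₀ : 0 ≤ C/(1-r₀) := div_nonneg hC0 (by linarith)
    have h1rp : (0:ℝ) < 1-r := by linarith
    nlinarith [hfin, htri, mul_le_mul_of_nonneg_left hfin h1rp.le]
  -- tendsto zero of (1-r)*‖h₁ r‖
  have htn : Tendsto (fun r:ℝ => (1-r)*‖h₁ (r:ℂ)‖) (𝓝[<] (1:ℝ)) (𝓝 0) := by
    rw [Metric.tendsto_nhdsWithin_nhds]
    intro ε hε
    have hev1 : ∀ᶠ r:ℝ in 𝓝[<] (1:ℝ), dist ((1-r)*(h₁ (r:ℂ)).re/(1+r)) 0 < ε/16 :=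
      htφ₁ (Metric.ball_mem_nhds 0 (by positivity))
    have hev2 := Ioo_mem_nhdsLT_of_mem (by norm_num : (1:ℝ) ∈ Ioc (0:ℝ) 1)
    obtain ⟨r₀, hd₀, hr₀⟩ := (hev1.and (eventually_mem_set.mpr hev2)).exists
    set C := 4*((1-r₀)*(h₁ ((r₀:ℝ):ℂ)).re/(1+r₀)) with hC
    have hCε : C < ε/2 := by
      rw [Real.dist_eq, sub_zero] at hd₀
      have := abs_lt.mp hd₀
      rw [hC]; linarith [this.2]
    set δ := min (1-r₀) (ε/(2*(‖h₁ ((r₀:ℝ):ℂ)‖+1))) with hδ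
    refine ⟨δ, lt_min (by linarith [hr₀.2]) (by positivity), fun r hr hdist => ?_⟩
    have hr1 : r < 1 := hr
    rw [Real.dist_eq, abs_of_nonpos (by linarith)] at hdist
    have h1rδ : 1 - r < δ := by linarith
    have hrr₀ : r₀ ≤ r := by
      have := lt_of_lt_of_le h1rδ (min_le_left _ _)
      linarith
    have hk := hkey r₀ r hr₀.1.le hrr₀ hr1
    have hsmall : (1-r)*‖h₁ ((r₀:ℝ):ℂ)‖ < ε/2 := by
      have h2 : 1 - r < ε/(2*(‖h₁ ((r₀:ℝ):ℂ)‖+1)) := lt_of_lt_of_le h1rδ (min_le_right _ _)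
      have h3 : (0:ℝ) < 2*(‖h₁ ((r₀:ℝ):ℂ)‖+1) := by positivity
      rw [lt_div_iff₀ h3] at h2
      nlinarith [norm_nonneg (h₁ ((r₀:ℝ):ℂ))]
    rw [Real.dist_eq, sub_zero, _root_.abs_of_nonneg
      (mul_nonneg (by linarith) (norm_nonneg _))]
    calc (1-r)*‖h₁ (r:ℂ)‖ ≤ (1-r)*‖h₁ ((r₀:ℝ):ℂ)‖ + C := hk
      _ < ε/2 + ε/2 := by linarith
      _ = ε := by ring
  -- complex version
  have htc : Tendsto (fun r:ℝ => ((1:ℂ)-(r:ℂ)) * h₁ (r:ℂ)) (𝓝[<] (1:ℝ)) (𝓝 0) := by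
    apply squeeze_zero_norm' _ htn
    filter_upwards [self_mem_nhdsWithin] with r (hr : r < 1)
    rw [norm_mul]
    have : ‖(1:ℂ)-(r:ℂ)‖ = 1 - r := by
      rw [show (1:ℂ) - (r:ℂ) = (((1-r:ℝ)):ℂ) by push_cast; ring, Complex.norm_real,
        Real.norm_eq_abs, _root_.abs_of_nonneg (by linarith)]
    rw [this]
  -- final assembly
  refine ⟨a, ha0, ?_⟩
  have t3 : Tendsto (fun r:ℝ => ((a/2:ℝ):ℂ)*(1+(r:ℂ))) (𝓝[<] (1:ℝ)) (𝓝 (a:ℂ)) := by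
    have hc : Continuous (fun r:ℝ => ((a/2:ℝ):ℂ)*(1+(r:ℂ))) := by continuity
    have := (hc.tendsto (1:ℝ)).mono_left (nhdsWithin_le_nhds (s := Iio (1:ℝ)))
    convert this using 2
    push_cast
    ring
  have hsum := htc.add t3
  rw [zero_add] at hsum
  apply hsum.congr'
  filter_upwards [Ioo_mem_nhdsLT_of_mem (by norm_num : (1:ℝ) ∈ Ioc (0:ℝ) 1)] with r hr
  have hr1 : (1:ℂ) - (r:ℂ) ≠ 0 := by
    rw [show (1:ℂ) - (r:ℂ) = (((1-r:ℝ)):ℂ) by push_cast; ring]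
    rw [Complex.ofReal_ne_zero]
    intro hc; linarith [hr.2]
  have hr2 : (r:ℂ) - 1 ≠ 0 := by
    intro hc; apply hr1; linear_combination -hc
  set w := ((r:ℝ):ℂ) with hw
  have e8 : ((1:ℂ)-w)*(g w/(-(1-w)^2)) = g w/(w-1) := by
    rw [mul_div_assoc']
    rw [div_eq_div_iff (neg_ne_zero.mpr (pow_ne_zero 2 hr1)) hr2]
    ring
  have e9 : ((1:ℂ)-w)*(h₁ w) + ((a/2:ℝ):ℂ)*(1+w) = ((1:ℂ)-w)*(h w) := by
    simp only [hh₁]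
    field_simp
    ring
  rw [e9]
  simp only [hh]
  exact e8
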